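/- Define, for a non-disturbing n-cycle behavior B, the cost monotone M_NPR(B) = inf { n + 2(α − 1) : α ∈ [0,1], F(α) → B }, with M_NPR(B) = +∞ if no such α exists. Then for every α ∈ [0,1], M_NPR(F(α)) = n + 2(α − 1) = Ω_γ(F(α)). -/

import Mathlib

open Finset

/-- The outcome value `±1` encoded by a `Bool`. -/
def sval (b : Bool) : ℝ := if b then 1 else -1

/-- An `n`-cycle behavior: for each context `{X_i, X_{i+1}}` (`i ∈ ZMod n`) a
probability distribution `p i` on pairs of `±1` outcomes (encoded as `Bool`s). -/
def IsNCycleBehavior (n : ℕ) (p : ZMod n → Bool → Bool → ℝ) : Prop :=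
  (∀ i a b, 0 ≤ p i a b) ∧ ∀ i : ZMod n, ∑ a : Bool, ∑ b : Bool, p i a b = 1

/-- Non-disturbance: for all `i` and `b`, `Σ_a p_i(a,b) = Σ_c p_{i+1}(b,c)`. -/
def NCycleNonDisturbing (n : ℕ) (p : ZMod n → Bool → Bool → ℝ) : Prop :=
  ∀ (i : ZMod n) (b : Bool), ∑ a : Bool, p i a b = ∑ c : Bool, p (i + 1) b c

/-- Noncontextuality: existence of a global probability distribution `q` on
`ZMod n → Bool` whose marginals reproduce all the `p i`. -/
def NCycleNoncontextual (n : ℕ) [NeZero n] (p : ZMod n → Bool → Bool → ℝ) : Prop :=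
  ∃ q : (ZMod n → Bool) → ℝ, (∀ x, 0 ≤ q x) ∧ (∑ x : ZMod n → Bool, q x = 1) ∧
    ∀ (i : ZMod n) (a b : Bool),
      p i a b = ∑ x : ZMod n → Bool, (if x i = a ∧ x (i + 1) = b then q x else 0)

/-- A sign vector: `γ : ZMod n → {-1, 1}` with an odd number of entries equal to `-1`. -/
def IsSignVector (n : ℕ) (γ : ZMod n → ℝ) : Prop :=
  (∀ i, γ i = 1 ∨ γ i = -1) ∧ ∃ S : Finset (ZMod n), Odd S.card ∧ ∀ i, γ i = -1 ↔ i ∈ S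

/-- The noncontextuality functional `Ω_γ(p) = Σ_i γ(i) ⟨X_i X_{i+1}⟩_p`, where
`⟨X_i X_{i+1}⟩_p = Σ_{a,b} a·b·p_i(a,b)`. -/
noncomputable def OmegaNC (n : ℕ) [NeZero n] (γ : ZMod n → ℝ)
    (p : ZMod n → Bool → Bool → ℝ) : ℝ :=
  ∑ i : ZMod n, γ i * ∑ a : Bool, ∑ b : Bool, sval a * sval b * p i a b

/-- A type-preserving noncontextual wiring on the `n`-cycle scenario: a finite set `Λ`
(of natural numbers) with a probability distribution `ρ`; a finite set `R` with
pre-processing distributions `q j (·|λ)` on `R`; a context-selection map `g`; and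
post-processing distributions `m j (·|r, s, λ)` on `{-1,1}` (encoded as `Bool`). -/
structure NCWiring (n : ℕ) where
  Λ : Finset ℕ
  ρ : ℕ → ℝ
  ρ_nonneg : ∀ l ∈ Λ, 0 ≤ ρ l
  ρ_sum : ∑ l ∈ Λ, ρ l = 1
  R : Finset ℕ
  q : ZMod n → ℕ → ℕ → ℝ
  q_nonneg : ∀ j l r, 0 ≤ q j l r
  q_sum : ∀ j : ZMod n, ∀ l ∈ Λ, ∑ r ∈ R, q j l r = 1
  g : ZMod n → ℕ → ℕ → ZMod n
  m : ZMod n → ℕ → Bool → ℕ → Bool → ℝ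
  m_nonneg : ∀ j r s l t, 0 ≤ m j r s l t
  m_sum : ∀ j r s l, ∑ t : Bool, m j r s l t = 1

/-- The action of a noncontextual wiring on a behavior:
`(W(B))_i(t,t') = Σ_λ ρ(λ) Σ_{r,r'} q_i(r|λ) q_{i+1}(r'|λ)
  Σ_{s,s'} p_{g(i,r,r')}(s,s') m_i(t|r,s,λ) m_{i+1}(t'|r',s',λ)`. -/
def NCWiring.apply {n : ℕ} (W : NCWiring n) (p : ZMod n → Bool → Bool → ℝ) :
    ZMod n → Bool → Bool → ℝ :=
  fun i t t' => ∑ l ∈ W.Λ, W.ρ l * ∑ r ∈ W.R, ∑ r' ∈ W.R,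
    W.q i l r * W.q (i + 1) l r' * ∑ s : Bool, ∑ s' : Bool,
      p (W.g i r r') s s' * W.m i r s l t * W.m (i + 1) r' s' l t'

/-- A wiring is deterministic when every pre-processing distribution `q j (·|λ)` and
every post-processing distribution `m j (·|r,s,λ)` is a point mass. -/
def NCWiring.IsDeterministic {n : ℕ} (W : NCWiring n) : Prop :=
  (∀ j : ZMod n, ∀ l ∈ W.Λ, ∃ r₀ ∈ W.R, ∀ r ∈ W.R, W.q j l r = if r = r₀ then 1 else 0) ∧
  (∀ (j : ZMod n) (r : ℕ) (s : Bool) (l : ℕ),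
    ∃ t₀ : Bool, ∀ t : Bool, W.m j r s l t = if t = t₀ then 1 else 0)

/-- `B → B'`: some type-preserving noncontextual wiring maps `B` to `B'`. -/
def NCConvertsTo (n : ℕ) (B B' : ZMod n → Bool → Bool → ℝ) : Prop :=
  ∃ W : NCWiring n, W.apply B = B'

/-- The PR-like behavior for a sign vector `γ`: `(B_PR)_i(a,b) = (1 + γ(i)·a·b)/4`. -/
noncomputable def BPR (n : ℕ) (γ : ZMod n → ℝ) : ZMod n → Bool → Bool → ℝ :=
  fun i a b => (1 + γ i * sval a * sval b) / 4

/-- The noisy-PR behavior `B_NPR = ((n-2)/n)·B_PR + (2/n)·B_∅`, where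
`B_∅` is the maximally mixed behavior with all probabilities `1/4`. -/
noncomputable def BNPR (n : ℕ) (γ : ZMod n → ℝ) : ZMod n → Bool → Bool → ℝ :=
  fun i a b => (((n : ℝ) - 2) / (n : ℝ)) * BPR n γ i a b + (2 / (n : ℝ)) * (1 / 4)

/-- The interpolating family `F(α) = α·B_PR + (1-α)·B_NPR`. -/
noncomputable def Fmix (n : ℕ) (γ : ZMod n → ℝ) (α : ℝ) : ZMod n → Bool → Bool → ℝ :=
  fun i a b => α * BPR n γ i a b + (1 - α) * BNPR n γ i a b


section Aux

lemma sval_sq (b : Bool) : sval b * sval b = 1 := by cases b <;> simp [sval]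

lemma abs_sval (b : Bool) : |sval b| = 1 := by cases b <;> simp [sval]

lemma zmod_closure {n : ℕ} [NeZero n] (P : ZMod n → Prop)
    (h : ∀ i, P i → P (i + 1)) (i₀ : ZMod n) (h₀ : P i₀) : ∀ i, P i := by
  have key : ∀ m : ℕ, P (i₀ + m) := by
    intro m
    induction m with
    | zero => simpa using h₀
    | succ k ih => push_cast; rw [← add_assoc]; exact h _ ih
  intro i
  have := key (i - i₀).val
  rwa [ZMod.natCast_val, ZMod.cast_id, add_sub_cancel] at this

lemma prod_gamma {n : ℕ} [NeZero n] (γ : ZMod n → ℝ) (hγ : IsSignVector n γ) :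
    ∏ i : ZMod n, γ i = -1 := by
  obtain ⟨h1, S, hodd, hS⟩ := hγ
  have : ∏ i : ZMod n, γ i = (∏ i ∈ S, γ i) * ∏ i ∈ Sᶜ, γ i :=
    (Finset.prod_mul_prod_compl S γ).symm
  rw [this]
  have e1 : ∏ i ∈ S, γ i = (-1 : ℝ) ^ S.card := by
    rw [← Finset.prod_const]
    exact Finset.prod_congr rfl fun i hi => (hS i).mpr hi
  have e2 : ∏ i ∈ Sᶜ, γ i = 1 := by
    apply Finset.prod_eq_one
    intro i hi
    rcases h1 i with h | h
    · exact h
    · exact absurd ((hS i).mp h) (by simpa using hi)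
  rw [e1, e2, hodd.neg_one_pow, mul_one]

lemma Fmix_eq {n : ℕ} (hn : (n : ℝ) ≠ 0) (γ : ZMod n → ℝ) (β : ℝ) (i : ZMod n) (a b : Bool) :
    Fmix n γ β i a b = (1 + (((n : ℝ) - 2 + 2 * β) / n) * (γ i * (sval a * sval b))) / 4 := by
  unfold Fmix BNPR BPR
  field_simp
  ring

lemma omega_Fmix {n : ℕ} [NeZero n] (hn : 3 ≤ n) (γ : ZMod n → ℝ)
    (h1 : ∀ i, γ i = 1 ∨ γ i = -1) (β : ℝ) :
    OmegaNC n γ (Fmix n γ β) = (n : ℝ) - 2 + 2 * β := by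
  have hn0 : (n : ℝ) ≠ 0 := Nat.cast_ne_zero.mpr (by omega)
  have inner : ∀ i : ZMod n, ∑ a : Bool, ∑ b : Bool, sval a * sval b * Fmix n γ β i a b
      = (((n : ℝ) - 2 + 2 * β) / n) * γ i := by
    intro i
    simp only [Fmix_eq hn0 γ β, Fintype.sum_bool, sval]
    norm_num
    ring
  unfold OmegaNC
  rw [Finset.sum_congr rfl fun i _ => by rw [inner i]]
  have sq : ∀ i : ZMod n, γ i * ((((n : ℝ) - 2 + 2 * β) / n) * γ i)
      = ((n : ℝ) - 2 + 2 * β) / n := by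
    intro i
    rcases h1 i with h | h <;> rw [h] <;> ring
  rw [Finset.sum_congr rfl fun i _ => sq i, Finset.sum_const, Finset.card_univ, ZMod.card,
    nsmul_eq_mul]
  field_simp

end Aux
def idWiring (n : ℕ) : NCWiring n where
  Λ := {0}
  ρ := fun _ => 1
  ρ_nonneg := fun _ _ => zero_le_one
  ρ_sum := by simp
  R := {0}
  q := fun _ _ _ => 1
  q_nonneg := fun _ _ _ => zero_le_one
  q_sum := fun _ _ _ => by simp
  g := fun i _ _ => i
  m := fun _ _ s _ t => if t = s then 1 else 0
  m_nonneg := by intro j r s l t; split <;> norm_num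
  m_sum := by intro j r s l; cases s <;> simp [Fintype.sum_bool]

lemma idWiring_apply {n : ℕ} (p : ZMod n → Bool → Bool → ℝ) :
    (idWiring n).apply p = p := by
  funext i t t'
  unfold NCWiring.apply idWiring
  cases t <;> cases t' <;> simp [Fintype.sum_bool]
lemma cycle_vertex {n : ℕ} [NeZero n] (hn : 3 ≤ n) (γ : ZMod n → ℝ) (hγ : IsSignVector n γ)
    (c : ℝ) (hc1 : ((n : ℝ) - 2) / n ≤ c) (hc2 : c ≤ 1)
    (a d : ZMod n → ℝ) (hd : ∀ i, 0 ≤ d i) (had : ∀ i, |a i| + d i ≤ 1)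
    (hv : ∀ i, (|a i| = 1 ∧ d i = 0) ∨ a i = 0) :
    ∑ i : ZMod n, (γ i * (a i * a (i + 1)) + c * (d i * d (i + 1))) ≤ (n : ℝ) * c := by
  have hnR : (3 : ℝ) ≤ (n : ℝ) := by exact_mod_cast hn
  have hn0 : (0 : ℝ) < n := by linarith
  have hc0 : 0 ≤ c := le_trans (div_nonneg (by linarith) (le_of_lt hn0)) hc1
  have hnc : (n : ℝ) - 2 ≤ n * c := by
    rw [div_le_iff₀ hn0] at hc1; linarith
  have hγ1 : ∀ i, |γ i| = 1 := by
    intro i; rcases hγ.1 i with h | h <;> rw [h] <;> norm_num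
  have hd1 : ∀ i, d i ≤ 1 := fun i => by have := had i; have := abs_nonneg (a i); linarith
  have ha1 : ∀ i, |a i| ≤ 1 := fun i => by have := had i; have := hd i; linarith
  set e : ZMod n → ℝ := fun i => γ i * (a i * a (i + 1)) + c * (d i * d (i + 1)) with he
  have he1 : ∀ i, e i ≤ 1 := by
    intro i
    rcases hv i with ⟨h1, h2⟩ | h0
    · have : γ i * (a i * a (i + 1)) ≤ |γ i| * (|a i| * |a (i + 1)|) := by
        rw [← abs_mul, ← abs_mul]; exact le_abs_self _
      rw [hγ1 i, h1] at this
      have := ha1 (i + 1)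
      simp only [he, h2]
      nlinarith
    · have h2 : d i * d (i + 1) ≤ 1 := by
        have := hd i; have := hd1 i; have := hd (i+1); have := hd1 (i+1); nlinarith
      simp only [he, h0]
      nlinarith
  by_cases hall : ∀ i, a i ≠ 0
  · -- all sites are A-type
    have hA : ∀ i, |a i| = 1 ∧ d i = 0 := fun i => (hv i).resolve_right (hall i)
    have hee : ∀ i, e i = γ i * (a i * a (i + 1)) := by
      intro i; simp [he, (hA i).2]
    have habs : ∀ i, |e i| = 1 := by
      intro i
      rw [hee i, abs_mul, abs_mul, hγ1 i, (hA i).1, (hA (i+1)).1]; norm_num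
    have hprod : ∏ i : ZMod n, e i = -1 := by
      have h1 : ∏ i : ZMod n, e i = (∏ i : ZMod n, γ i) * ((∏ i : ZMod n, a i) * (∏ i : ZMod n, a (i + 1))) := by
        rw [← Finset.prod_mul_distrib, ← Finset.prod_mul_distrib]
        exact Finset.prod_congr rfl fun i _ => by rw [hee i]
      have h2 : ∏ i : ZMod n, a (i + 1) = ∏ i : ZMod n, a i :=
        Fintype.prod_equiv (Equiv.addRight (1 : ZMod n)) _ _ (fun i => rfl)
      have h3 : (∏ i : ZMod n, a i) * (∏ i : ZMod n, a i) = 1 := by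
        rw [← Finset.prod_mul_distrib]
        apply Finset.prod_eq_one
        intro i _
        rcases abs_eq (by norm_num : (0:ℝ) ≤ 1) |>.mp ((hA i).1) with h | h <;> rw [h] <;> norm_num
      rw [h1, h2, h3, prod_gamma γ hγ]; ring
    have hex : ∃ l, e l = -1 := by
      by_contra hne
      push_neg at hne
      have : ∏ i : ZMod n, e i = 1 := by
        apply Finset.prod_eq_one
        intro i _
        rcases abs_eq (by norm_num : (0:ℝ) ≤ 1) |>.mp (habs i) with h | h
        · exact h
        · exact absurd h (hne i)
      rw [this] at hprod; norm_num at hprod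
    obtain ⟨l, hl⟩ := hex
    rw [← Finset.add_sum_erase _ e (Finset.mem_univ l), hl]
    have hrest : ∑ i ∈ Finset.univ.erase l, e i ≤ ((n : ℝ) - 1) := by
      have := Finset.sum_le_card_nsmul (Finset.univ.erase l) e 1 (fun i _ => he1 i)
      rw [Finset.card_erase_of_mem (Finset.mem_univ l), Finset.card_univ, ZMod.card] at this
      rw [nsmul_eq_mul, mul_one] at this
      have : ∑ i ∈ Finset.univ.erase l, e i ≤ ((n - 1 : ℕ) : ℝ) := by exact_mod_cast this
      have hcast : ((n - 1 : ℕ) : ℝ) = (n : ℝ) - 1 := by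
        have : 1 ≤ n := by omega
        push_cast [this]; ring
      linarith
    linarith
  · push_neg at hall
    obtain ⟨k, hk⟩ := hall
    by_cases hall0 : ∀ i, a i = 0
    · -- all sites are D/O-type
      have : ∀ i ∈ Finset.univ, e i ≤ c := by
        intro i _
        have h2 : d i * d (i + 1) ≤ 1 := by
          have := hd i; have := hd1 i; have := hd (i+1); have := hd1 (i+1); nlinarith
        simp only [he, hall0 i]
        nlinarith
      have := Finset.sum_le_card_nsmul Finset.univ e c this
      rw [Finset.card_univ, ZMod.card, nsmul_eq_mul] at this
      exact this
    · push_neg at hall0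
      obtain ⟨i₀, hi₀⟩ := hall0
      have hl1 : ∃ l, a l ≠ 0 ∧ a (l + 1) = 0 := by
        by_contra hne
        push_neg at hne
        exact zmod_closure (fun i => a i ≠ 0) hne i₀ hi₀ k hk
      have hl2 : ∃ l, a l = 0 ∧ a (l + 1) ≠ 0 := by
        by_contra hne
        push_neg at hne
        exact hi₀ (zmod_closure (fun i => a i = 0) hne k hk i₀)
      obtain ⟨l1, hl11, hl12⟩ := hl1
      obtain ⟨l2, hl21, hl22⟩ := hl2
      have hne12 : l1 ≠ l2 := fun h => hl11 (h ▸ hl21)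
      have he_l1 : e l1 = 0 := by
        have hdl1 : d l1 = 0 := ((hv l1).resolve_right hl11).2
        simp [he, hl12, hdl1]
      have he_l2 : e l2 = 0 := by
        have hdl2 : d (l2 + 1) = 0 := ((hv (l2 + 1)).resolve_right hl22).2
        simp [he, hl21, hdl2]
      have hmem2 : l2 ∈ Finset.univ.erase l1 := Finset.mem_erase.mpr ⟨(Ne.symm hne12), Finset.mem_univ _⟩
      rw [← Finset.add_sum_erase _ e (Finset.mem_univ l1), he_l1,
        ← Finset.add_sum_erase _ e hmem2, he_l2]
      have hrest : ∑ i ∈ (Finset.univ.erase l1).erase l2, e i ≤ ((n : ℝ) - 2) := by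
        have := Finset.sum_le_card_nsmul ((Finset.univ.erase l1).erase l2) e 1 (fun i _ => he1 i)
        rw [Finset.card_erase_of_mem hmem2, Finset.card_erase_of_mem (Finset.mem_univ l1),
          Finset.card_univ, ZMod.card, nsmul_eq_mul, mul_one] at this
        have h2 : ∑ i ∈ (Finset.univ.erase l1).erase l2, e i ≤ ((n - 1 - 1 : ℕ) : ℝ) := by exact_mod_cast this
        have hcast : ((n - 1 - 1 : ℕ) : ℝ) = (n : ℝ) - 2 := by
          rw [Nat.sub_sub, Nat.cast_sub (by omega)]
          norm_num
        linarith
      linarith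
lemma cycle_ineq {n : ℕ} [NeZero n] (hn : 3 ≤ n) (γ : ZMod n → ℝ) (hγ : IsSignVector n γ)
    (c : ℝ) (hc1 : ((n : ℝ) - 2) / n ≤ c) (hc2 : c ≤ 1)
    (a d : ZMod n → ℝ) (hd : ∀ i, 0 ≤ d i) (had : ∀ i, |a i| + d i ≤ 1) :
    ∑ i : ZMod n, (γ i * (a i * a (i + 1)) + c * (d i * d (i + 1))) ≤ (n : ℝ) * c := by
  haveI : Fact (1 < n) := ⟨by omega⟩
  suffices H : ∀ F : Finset (ZMod n), ∀ a d : ZMod n → ℝ, (∀ i, 0 ≤ d i) →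
      (∀ i, |a i| + d i ≤ 1) → (∀ i ∉ F, (|a i| = 1 ∧ d i = 0) ∨ a i = 0) →
      ∑ i : ZMod n, (γ i * (a i * a (i + 1)) + c * (d i * d (i + 1))) ≤ (n : ℝ) * c by
    exact H Finset.univ a d hd had (fun i hi => absurd (Finset.mem_univ i) hi)
  intro F
  induction F using Finset.induction with
  | empty =>
    intro a d hd had hv
    exact cycle_vertex hn γ hγ c hc1 hc2 a d hd had (fun i => hv i (Finset.notMem_empty i))
  | @insert j F hjF ih =>
    intro a d hd had hv
    have hj1 : j + 1 ≠ j := by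
      intro h
      have h0 : (1 : ZMod n) = 0 := by
        have := add_left_cancel (a := j) (b := (1 : ZMod n)) (c := 0) (by simpa using h)
        simpa using this
      exact one_ne_zero h0
    -- the branch lemma: for each vertex value at site j, the updated config is bounded
    have branch : ∀ av dv : ℝ, |av| + dv ≤ 1 → 0 ≤ dv → ((|av| = 1 ∧ dv = 0) ∨ av = 0) →
        ∑ i : ZMod n, (γ i * (Function.update a j av i * Function.update a j av (i + 1))
          + c * (Function.update d j dv i * Function.update d j dv (i + 1))) ≤ (n : ℝ) * c := by
      intro av dv h1 h2 h3
      apply ih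
      · intro i
        rcases eq_or_ne i j with h | h
        · subst h; rw [Function.update_self]; exact h2
        · rw [Function.update_of_ne h]; exact hd i
      · intro i
        rcases eq_or_ne i j with h | h
        · subst h; rw [Function.update_self, Function.update_self]; exact h1
        · rw [Function.update_of_ne h, Function.update_of_ne h]; exact had i
      · intro i hiF
        rcases eq_or_ne i j with h | h
        · subst h; rw [Function.update_self, Function.update_self]; exact h3
        · rw [Function.update_of_ne h, Function.update_of_ne h]
          exact hv i (by simp [Finset.mem_insert, h, hiF])
    have B1 := branch 1 0 (by norm_num) le_rfl (Or.inl ⟨by norm_num, rfl⟩)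
    have B2 := branch (-1) 0 (by norm_num) le_rfl (Or.inl ⟨by norm_num, rfl⟩)
    have B3 := branch 0 1 (by norm_num) zero_le_one (Or.inr rfl)
    have B4 := branch 0 0 (by norm_num) le_rfl (Or.inr rfl)
    have hadj := had j
    have hdj := hd j
    -- per-edge convex-combination identity
    have edge : ∀ i : ZMod n,
        γ i * (a i * a (i + 1)) + c * (d i * d (i + 1)) =
        ((|a j| + a j) / 2) * (γ i * (Function.update a j (1:ℝ) i * Function.update a j (1:ℝ) (i + 1))
            + c * (Function.update d j (0:ℝ) i * Function.update d j (0:ℝ) (i + 1)))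
        + ((|a j| - a j) / 2) * (γ i * (Function.update a j (-1:ℝ) i * Function.update a j (-1:ℝ) (i + 1))
            + c * (Function.update d j (0:ℝ) i * Function.update d j (0:ℝ) (i + 1)))
        + (d j) * (γ i * (Function.update a j (0:ℝ) i * Function.update a j (0:ℝ) (i + 1))
            + c * (Function.update d j (1:ℝ) i * Function.update d j (1:ℝ) (i + 1)))
        + (1 - |a j| - d j) * (γ i * (Function.update a j (0:ℝ) i * Function.update a j (0:ℝ) (i + 1))
            + c * (Function.update d j (0:ℝ) i * Function.update d j (0:ℝ) (i + 1))) := by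
      intro i
      rcases eq_or_ne i j with h1 | h1
      · subst h1
        simp only [Function.update_self, Function.update_of_ne hj1]
        ring
      · rcases eq_or_ne (i + 1) j with h2 | h2
        · rw [← h2]
          simp only [Function.update_self, Function.update_of_ne h1, ← h2,
            Function.update_of_ne (h2 ▸ h1)]
          ring
        · simp only [Function.update_of_ne h1, Function.update_of_ne h2]
          ring
    calc ∑ i : ZMod n, (γ i * (a i * a (i + 1)) + c * (d i * d (i + 1)))
        = ∑ i : ZMod n, (((|a j| + a j) / 2) * (γ i * (Function.update a j (1:ℝ) i * Function.update a j (1:ℝ) (i + 1))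
            + c * (Function.update d j (0:ℝ) i * Function.update d j (0:ℝ) (i + 1)))
        + ((|a j| - a j) / 2) * (γ i * (Function.update a j (-1:ℝ) i * Function.update a j (-1:ℝ) (i + 1))
            + c * (Function.update d j (0:ℝ) i * Function.update d j (0:ℝ) (i + 1)))
        + (d j) * (γ i * (Function.update a j (0:ℝ) i * Function.update a j (0:ℝ) (i + 1))
            + c * (Function.update d j (1:ℝ) i * Function.update d j (1:ℝ) (i + 1)))
        + (1 - |a j| - d j) * (γ i * (Function.update a j (0:ℝ) i * Function.update a j (0:ℝ) (i + 1))
            + c * (Function.update d j (0:ℝ) i * Function.update d j (0:ℝ) (i + 1)))) :=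
          Finset.sum_congr rfl fun i _ => edge i
      _ = ((|a j| + a j) / 2) * (∑ i : ZMod n, (γ i * (Function.update a j (1:ℝ) i * Function.update a j (1:ℝ) (i + 1))
            + c * (Function.update d j (0:ℝ) i * Function.update d j (0:ℝ) (i + 1))))
        + ((|a j| - a j) / 2) * (∑ i : ZMod n, (γ i * (Function.update a j (-1:ℝ) i * Function.update a j (-1:ℝ) (i + 1))
            + c * (Function.update d j (0:ℝ) i * Function.update d j (0:ℝ) (i + 1))))
        + (d j) * (∑ i : ZMod n, (γ i * (Function.update a j (0:ℝ) i * Function.update a j (0:ℝ) (i + 1))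
            + c * (Function.update d j (1:ℝ) i * Function.update d j (1:ℝ) (i + 1))))
        + (1 - |a j| - d j) * (∑ i : ZMod n, (γ i * (Function.update a j (0:ℝ) i * Function.update a j (0:ℝ) (i + 1))
            + c * (Function.update d j (0:ℝ) i * Function.update d j (0:ℝ) (i + 1)))) := by
          rw [Finset.sum_add_distrib, Finset.sum_add_distrib, Finset.sum_add_distrib,
            ← Finset.mul_sum, ← Finset.mul_sum, ← Finset.mul_sum, ← Finset.mul_sum]
      _ ≤ (n : ℝ) * c := by
          have hl1n : (0:ℝ) ≤ (|a j| + a j) / 2 := by have := neg_abs_le (a j); linarith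
          have hl2n : (0:ℝ) ≤ (|a j| - a j) / 2 := by have := le_abs_self (a j); linarith
          have hl4n : (0:ℝ) ≤ 1 - |a j| - d j := by linarith
          have m1 := mul_le_mul_of_nonneg_left B1 hl1n
          have m2 := mul_le_mul_of_nonneg_left B2 hl2n
          have m3 := mul_le_mul_of_nonneg_left B3 hdj
          have m4 := mul_le_mul_of_nonneg_left B4 hl4n
          nlinarith [m1, m2, m3, m4]
lemma comb4_0 {α : Type*} (s : Finset α) (f1 f2 f3 f4 h : α → ℝ)
    (hc : ∀ x ∈ s, f1 x - f2 x - f3 x + f4 x = h x) :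
    (∑ x ∈ s, f1 x) - (∑ x ∈ s, f2 x) - (∑ x ∈ s, f3 x) + (∑ x ∈ s, f4 x) = ∑ x ∈ s, h x := by
  rw [← Finset.sum_sub_distrib, ← Finset.sum_sub_distrib, ← Finset.sum_add_distrib]
  exact Finset.sum_congr rfl hc

lemma comb4_1 {α : Type*} (s : Finset α) (ρ f1 f2 f3 f4 h : α → ℝ)
    (hc : ∀ x ∈ s, f1 x - f2 x - f3 x + f4 x = h x) :
    (∑ x ∈ s, ρ x * f1 x) - (∑ x ∈ s, ρ x * f2 x) - (∑ x ∈ s, ρ x * f3 x)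
      + (∑ x ∈ s, ρ x * f4 x) = ∑ x ∈ s, ρ x * h x := by
  apply comb4_0
  intro x hx
  rw [← hc x hx]; ring

noncomputable def muW {n : ℕ} (W : NCWiring n) (j : ZMod n) (r : ℕ) (s : Bool) (l : ℕ) : ℝ :=
  W.m j r s l true - W.m j r s l false

noncomputable def AW {n : ℕ} (W : NCWiring n) (j : ZMod n) (r : ℕ) (l : ℕ) : ℝ :=
  (muW W j r true l + muW W j r false l) / 2

noncomputable def DW {n : ℕ} (W : NCWiring n) (j : ZMod n) (r : ℕ) (l : ℕ) : ℝ :=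
  (muW W j r true l - muW W j r false l) / 2

noncomputable def abarW {n : ℕ} (W : NCWiring n) (j : ZMod n) (l : ℕ) : ℝ :=
  ∑ r ∈ W.R, W.q j l r * AW W j r l

noncomputable def dbarW {n : ℕ} (W : NCWiring n) (j : ZMod n) (l : ℕ) : ℝ :=
  ∑ r ∈ W.R, W.q j l r * |DW W j r l|

lemma muW_abs_le {n : ℕ} (W : NCWiring n) (j : ZMod n) (r : ℕ) (s : Bool) (l : ℕ) :
    |muW W j r s l| ≤ 1 := by
  have h1 := W.m_nonneg j r s l true
  have h2 := W.m_nonneg j r s l false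
  have h3 := W.m_sum j r s l
  rw [Fintype.sum_bool] at h3
  rw [abs_le]; unfold muW; constructor <;> linarith

lemma AD_le {n : ℕ} (W : NCWiring n) (j : ZMod n) (r : ℕ) (l : ℕ) :
    |AW W j r l| + |DW W j r l| ≤ 1 := by
  have h1 := muW_abs_le W j r true l
  have h2 := muW_abs_le W j r false l
  rw [abs_le] at h1 h2
  unfold AW DW
  rcases abs_cases ((muW W j r true l + muW W j r false l) / 2) with ⟨e1, _⟩ | ⟨e1, _⟩ <;>
    rcases abs_cases ((muW W j r true l - muW W j r false l) / 2) with ⟨e2, _⟩ | ⟨e2, _⟩ <;>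
    rw [e1, e2] <;> linarith

lemma corr_core (c γj : ℝ) (p : Bool → Bool → ℝ)
    (hp : ∀ s s', p s s' = (1 + c * (γj * (sval s * sval s'))) / 4)
    (m1 m2 : Bool → Bool → ℝ) :
    (∑ s : Bool, ∑ s' : Bool, p s s' * m1 s true * m2 s' true)
    - (∑ s : Bool, ∑ s' : Bool, p s s' * m1 s true * m2 s' false)
    - (∑ s : Bool, ∑ s' : Bool, p s s' * m1 s false * m2 s' true)
    + (∑ s : Bool, ∑ s' : Bool, p s s' * m1 s false * m2 s' false)
    = (((m1 true true - m1 true false) + (m1 false true - m1 false false)) / 2)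
        * (((m2 true true - m2 true false) + (m2 false true - m2 false false)) / 2)
      + c * γj * ((((m1 true true - m1 true false) - (m1 false true - m1 false false)) / 2)
        * (((m2 true true - m2 true false) - (m2 false true - m2 false false)) / 2)) := by
  simp only [Fintype.sum_bool, hp, sval]
  norm_num
  ring
lemma corr_core' {n : ℕ} (W : NCWiring n) (c : ℝ) (γ : ZMod n → ℝ) (i : ZMod n) (l r r' : ℕ) :
    (∑ s : Bool, ∑ s' : Bool, (1 + c * (γ (W.g i r r') * (sval s * sval s'))) / 4
        * W.m i r s l true * W.m (i + 1) r' s' l true)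
    - (∑ s : Bool, ∑ s' : Bool, (1 + c * (γ (W.g i r r') * (sval s * sval s'))) / 4
        * W.m i r s l true * W.m (i + 1) r' s' l false)
    - (∑ s : Bool, ∑ s' : Bool, (1 + c * (γ (W.g i r r') * (sval s * sval s'))) / 4
        * W.m i r s l false * W.m (i + 1) r' s' l true)
    + (∑ s : Bool, ∑ s' : Bool, (1 + c * (γ (W.g i r r') * (sval s * sval s'))) / 4
        * W.m i r s l false * W.m (i + 1) r' s' l false)
    = AW W i r l * AW W (i + 1) r' l
      + c * γ (W.g i r r') * (DW W i r l * DW W (i + 1) r' l) := by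
  have h := corr_core c (γ (W.g i r r'))
    (fun s s' => (1 + c * (γ (W.g i r r') * (sval s * sval s'))) / 4) (fun _ _ => rfl)
    (fun s t => W.m i r s l t) (fun s t => W.m (i + 1) r' s l t)
  unfold AW DW muW
  exact h

lemma corr_formula {n : ℕ} [NeZero n] (W : NCWiring n) (γ : ZMod n → ℝ) (c : ℝ) (i : ZMod n) :
    (∑ t : Bool, ∑ t' : Bool, sval t * sval t' *
        W.apply (fun j s s' => (1 + c * (γ j * (sval s * sval s'))) / 4) i t t')
    = ∑ l ∈ W.Λ, W.ρ l * ∑ r ∈ W.R, ∑ r' ∈ W.R, W.q i l r * W.q (i + 1) l r' *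
        (AW W i r l * AW W (i + 1) r' l
          + c * γ (W.g i r r') * (DW W i r l * DW W (i + 1) r' l)) := by
  set P := W.apply (fun j s s' => (1 + c * (γ j * (sval s * sval s'))) / 4) with hP
  have e1 : (∑ t : Bool, ∑ t' : Bool, sval t * sval t' * P i t t')
      = P i true true - P i true false - P i false true + P i false false := by
    simp only [Fintype.sum_bool, sval]
    norm_num
    ring
  rw [e1, hP]
  simp only [NCWiring.apply]
  apply comb4_1
  intro l _
  apply comb4_0
  intro r _
  apply comb4_0
  intro r' _
  have hc := corr_core' W c γ i l r r'
  linear_combination (W.q i l r * W.q (i + 1) l r') * hc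

lemma omega_wiring_le {n : ℕ} [NeZero n] (hn : 3 ≤ n) (γ : ZMod n → ℝ) (hγ : IsSignVector n γ)
    (c : ℝ) (hc1 : ((n : ℝ) - 2) / n ≤ c) (hc2 : c ≤ 1) (W : NCWiring n) :
    OmegaNC n γ (W.apply (fun j s s' => (1 + c * (γ j * (sval s * sval s'))) / 4)) ≤ (n : ℝ) * c := by
  have hnR : (3 : ℝ) ≤ (n : ℝ) := by exact_mod_cast hn
  have hn0 : (0 : ℝ) < n := by linarith
  have hc0 : 0 ≤ c := le_trans (div_nonneg (by linarith) (le_of_lt hn0)) hc1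
  have hγ1 : ∀ i, |γ i| = 1 := by
    intro i; rcases hγ.1 i with h | h <;> rw [h] <;> norm_num
  unfold OmegaNC
  rw [Finset.sum_congr rfl fun i _ => by rw [corr_formula W γ c i]]
  -- swap the i and l sums
  have swap : ∑ i : ZMod n, γ i * ∑ l ∈ W.Λ, W.ρ l * (∑ r ∈ W.R, ∑ r' ∈ W.R,
        W.q i l r * W.q (i + 1) l r' * (AW W i r l * AW W (i + 1) r' l
          + c * γ (W.g i r r') * (DW W i r l * DW W (i + 1) r' l)))
      = ∑ l ∈ W.Λ, W.ρ l * ∑ i : ZMod n, γ i * (∑ r ∈ W.R, ∑ r' ∈ W.R,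
        W.q i l r * W.q (i + 1) l r' * (AW W i r l * AW W (i + 1) r' l
          + c * γ (W.g i r r') * (DW W i r l * DW W (i + 1) r' l))) := by
    simp_rw [Finset.mul_sum]
    rw [Finset.sum_comm]
    apply Finset.sum_congr rfl
    intro l _
    apply Finset.sum_congr rfl
    intro i _
    apply Finset.sum_congr rfl
    intro r _
    apply Finset.sum_congr rfl
    intro r' _
    ring
  rw [swap]
  -- bound each λ-term
  have per_l : ∀ l ∈ W.Λ, (∑ i : ZMod n, γ i * (∑ r ∈ W.R, ∑ r' ∈ W.R,
        W.q i l r * W.q (i + 1) l r' * (AW W i r l * AW W (i + 1) r' l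
          + c * γ (W.g i r r') * (DW W i r l * DW W (i + 1) r' l)))) ≤ (n : ℝ) * c := by
    intro l hl
    have split : ∀ i : ZMod n, (∑ r ∈ W.R, ∑ r' ∈ W.R,
          W.q i l r * W.q (i + 1) l r' * (AW W i r l * AW W (i + 1) r' l
            + c * γ (W.g i r r') * (DW W i r l * DW W (i + 1) r' l)))
        = abarW W i l * abarW W (i + 1) l + ∑ r ∈ W.R, ∑ r' ∈ W.R,
            W.q i l r * W.q (i + 1) l r' * (c * γ (W.g i r r') * (DW W i r l * DW W (i + 1) r' l)) := by
      intro i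
      unfold abarW
      rw [Finset.sum_mul_sum, ← Finset.sum_add_distrib]
      apply Finset.sum_congr rfl
      intro r _
      rw [← Finset.sum_add_distrib]
      apply Finset.sum_congr rfl
      intro r' _
      ring
    have tbound : ∀ i : ZMod n, γ i * (∑ r ∈ W.R, ∑ r' ∈ W.R,
          W.q i l r * W.q (i + 1) l r' * (c * γ (W.g i r r') * (DW W i r l * DW W (i + 1) r' l)))
        ≤ c * (dbarW W i l * dbarW W (i + 1) l) := by
      intro i
      have habs : |∑ r ∈ W.R, ∑ r' ∈ W.R,
          W.q i l r * W.q (i + 1) l r' * (c * γ (W.g i r r') * (DW W i r l * DW W (i + 1) r' l))|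
          ≤ c * (dbarW W i l * dbarW W (i + 1) l) := by
        calc |∑ r ∈ W.R, ∑ r' ∈ W.R, W.q i l r * W.q (i + 1) l r'
                * (c * γ (W.g i r r') * (DW W i r l * DW W (i + 1) r' l))|
            ≤ ∑ r ∈ W.R, ∑ r' ∈ W.R, |W.q i l r * W.q (i + 1) l r'
                * (c * γ (W.g i r r') * (DW W i r l * DW W (i + 1) r' l))| := by
              refine le_trans (Finset.abs_sum_le_sum_abs _ _) ?_
              exact Finset.sum_le_sum fun r _ => Finset.abs_sum_le_sum_abs _ _
          _ = ∑ r ∈ W.R, ∑ r' ∈ W.R, (c * ((W.q i l r * |DW W i r l|)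
                * (W.q (i + 1) l r' * |DW W (i + 1) r' l|))) := by
              apply Finset.sum_congr rfl; intro r _
              apply Finset.sum_congr rfl; intro r' _
              rw [abs_mul, abs_mul, abs_mul, abs_mul, abs_mul,
                abs_of_nonneg (W.q_nonneg i l r), abs_of_nonneg (W.q_nonneg (i+1) l r'),
                abs_of_nonneg hc0, hγ1 (W.g i r r')]
              ring
          _ = c * (dbarW W i l * dbarW W (i + 1) l) := by
              unfold dbarW
              rw [Finset.sum_mul_sum, Finset.mul_sum]
              apply Finset.sum_congr rfl; intro r _
              rw [Finset.mul_sum]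
      calc γ i * _ ≤ |γ i * _| := le_abs_self _
        _ = |∑ r ∈ W.R, ∑ r' ∈ W.R, W.q i l r * W.q (i + 1) l r'
              * (c * γ (W.g i r r') * (DW W i r l * DW W (i + 1) r' l))| := by
            rw [abs_mul, hγ1 i, one_mul]
        _ ≤ _ := habs
    have hconstr : ∀ i : ZMod n, |abarW W i l| + dbarW W i l ≤ 1 := by
      intro i
      have h1 : |abarW W i l| ≤ ∑ r ∈ W.R, W.q i l r * |AW W i r l| := by
        refine le_trans (Finset.abs_sum_le_sum_abs _ _) ?_
        apply Finset.sum_le_sum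
        intro r _
        rw [abs_mul, abs_of_nonneg (W.q_nonneg i l r)]
      have h2 : (∑ r ∈ W.R, W.q i l r * |AW W i r l|) + dbarW W i l ≤ 1 := by
        unfold dbarW
        rw [← Finset.sum_add_distrib, ← W.q_sum i l hl]
        apply Finset.sum_le_sum
        intro r _
        have := AD_le W i r l
        have hq := W.q_nonneg i l r
        nlinarith [abs_nonneg (AW W i r l), abs_nonneg (DW W i r l)]
      linarith
    have hdpos : ∀ i : ZMod n, 0 ≤ dbarW W i l := by
      intro i
      apply Finset.sum_nonneg
      intro r _
      exact mul_nonneg (W.q_nonneg i l r) (abs_nonneg _)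
    calc ∑ i : ZMod n, γ i * (∑ r ∈ W.R, ∑ r' ∈ W.R,
          W.q i l r * W.q (i + 1) l r' * (AW W i r l * AW W (i + 1) r' l
            + c * γ (W.g i r r') * (DW W i r l * DW W (i + 1) r' l)))
        ≤ ∑ i : ZMod n, (γ i * (abarW W i l * abarW W (i + 1) l)
            + c * (dbarW W i l * dbarW W (i + 1) l)) := by
          apply Finset.sum_le_sum
          intro i _
          rw [split i, mul_add]
          exact add_le_add (le_refl _) (tbound i)
      _ ≤ (n : ℝ) * c := cycle_ineq hn γ hγ c hc1 hc2 (fun i => abarW W i l)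
          (fun i => dbarW W i l) hdpos hconstr
  calc ∑ l ∈ W.Λ, W.ρ l * ∑ i : ZMod n, γ i * (∑ r ∈ W.R, ∑ r' ∈ W.R,
        W.q i l r * W.q (i + 1) l r' * (AW W i r l * AW W (i + 1) r' l
          + c * γ (W.g i r r') * (DW W i r l * DW W (i + 1) r' l)))
      ≤ ∑ l ∈ W.Λ, W.ρ l * ((n : ℝ) * c) := by
        apply Finset.sum_le_sum
        intro l hl
        exact mul_le_mul_of_nonneg_left (per_l l hl) (W.ρ_nonneg l hl)
    _ = (n : ℝ) * c := by rw [← Finset.sum_mul, W.ρ_sum, one_mul]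

/-- the cost monotone
`M_NPR(B) = inf { n + 2(α-1) : α ∈ [0,1], F(α) → B }` (an infimum in the extended
reals, so that `M_NPR(B) = +∞` when no such `α` exists) satisfies, for every
`α ∈ [0,1]`, `M_NPR(F(α)) = n + 2(α-1) = Ω_γ(F(α))`. -/
theorem cost_monotone_on_Fmix (n : ℕ) [NeZero n] (hn : 3 ≤ n)
    (γ : ZMod n → ℝ) (hγ : IsSignVector n γ)
    (α : ℝ) (hα : α ∈ Set.Icc (0 : ℝ) 1) :
    sInf {x : EReal | ∃ β ∈ Set.Icc (0 : ℝ) 1,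
        NCConvertsTo n (Fmix n γ β) (Fmix n γ α) ∧
          x = (((n : ℝ) + 2 * (β - 1) : ℝ) : EReal)} =
      (((n : ℝ) + 2 * (α - 1) : ℝ) : EReal) ∧
    (n : ℝ) + 2 * (α - 1) = OmegaNC n γ (Fmix n γ α) := by
  have hnR : (3 : ℝ) ≤ (n : ℝ) := by exact_mod_cast hn
  have hn0 : (0 : ℝ) < n := by linarith
  have hn0' : (n : ℝ) ≠ 0 := ne_of_gt hn0
  have hOm := omega_Fmix hn γ hγ.1 α
  constructor
  · apply le_antisymm
    · apply sInf_le
      exact ⟨α, hα, ⟨idWiring n, idWiring_apply _⟩, rfl⟩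
    · apply le_sInf
      rintro x ⟨β, hβ, ⟨W, hW⟩, rfl⟩
      obtain ⟨hβ0, hβ1⟩ := hβ
      have hcβ1 : ((n : ℝ) - 2) / n ≤ ((n : ℝ) - 2 + 2 * β) / n := by
        gcongr
        linarith
      have hcβ2 : ((n : ℝ) - 2 + 2 * β) / n ≤ 1 := by
        rw [div_le_one hn0]
        linarith
      have hFeq : Fmix n γ β = fun j s s' =>
          (1 + (((n : ℝ) - 2 + 2 * β) / n) * (γ j * (sval s * sval s'))) / 4 := by
        funext j s s'
        exact Fmix_eq hn0' γ β j s s'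
      rw [hFeq] at hW
      have hle := omega_wiring_le hn γ hγ (((n : ℝ) - 2 + 2 * β) / n) hcβ1 hcβ2 W
      rw [hW, hOm] at hle
      have hnc : (n : ℝ) * (((n : ℝ) - 2 + 2 * β) / n) = (n : ℝ) - 2 + 2 * β := by
        field_simp
      rw [hnc] at hle
      have : (n : ℝ) + 2 * (α - 1) ≤ (n : ℝ) + 2 * (β - 1) := by linarith
      exact_mod_cast EReal.coe_le_coe_iff.mpr this
  · rw [hOm]; ring
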